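/- For m ≥ 2 and generic a₁,…,a_m ∈ ℂ* (in particular, pairwise distinct with all the 2m points (aᵢ:1:0), (1:-conj(aᵢ):0) distinct), the line L = {(s:t:0)} is the unique line of ℙ²(ℂ) containing at least 4 points of S = {(aᵢ:1:0), (1:-conj(aᵢ):0)} ∪ {(±1:0:1), (0:±1:1)}, and hence L is stabilized by every element of Aut_ℂ(ℙ², S). -/

import Mathlib

open Projectivization
open scoped LinearAlgebra.Projectivization

noncomputable section

abbrev P2 := ℙ ℂ (Fin 3 → ℂ)

/-- Coordinatewise complex conjugation on ℙ²(ℂ). -/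
def conjP (p : P2) : P2 :=
  Projectivization.mk ℂ (fun i => starRingEnd ℂ (p.rep i)) (by
    intro h
    apply p.rep_nonzero
    funext i
    have := congrFun h i
    simpa using this)

/-- The four points F = {(1:0:1), (-1:0:1), (0:1:1), (0:-1:1)}. -/
def F : Set P2 :=
  {Projectivization.mk ℂ ![1, 0, 1] (fun h => by have := congrFun h 0; simp at this),
   Projectivization.mk ℂ ![-1, 0, 1] (fun h => by have := congrFun h 2; simp at this),
   Projectivization.mk ℂ ![0, 1, 1] (fun h => by have := congrFun h 1; simp at this),
   Projectivization.mk ℂ ![0, -1, 1] (fun h => by have := congrFun h 2; simp at this)}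

/-- The set S = {(aᵢ:1:0), (1:-conj(aᵢ):0) : i} ∪ F. -/
def Spts (m : ℕ) (a : Fin m → ℂ) : Set P2 :=
  (⋃ i : Fin m,
    {Projectivization.mk ℂ ![a i, 1, 0] (fun h => by have := congrFun h 1; simp at this),
     Projectivization.mk ℂ ![1, -(starRingEnd ℂ (a i)), 0]
       (fun h => by have := congrFun h 0; simp at this)}) ∪ F

/-- A line in ℙ²(ℂ): the zero set of a nonzero linear form. -/
def IsLine (L : Set P2) : Prop :=
  ∃ f : (Fin 3 → ℂ) →ₗ[ℂ] ℂ, f ≠ 0 ∧ L = {p | f p.rep = 0}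

/-- The transformation of ℙ² induced by a linear automorphism of ℂ³. -/
def proj (g : (Fin 3 → ℂ) ≃ₗ[ℂ] (Fin 3 → ℂ)) : P2 → P2 :=
  Projectivization.map g.toLinearMap g.injective

/-- The line at infinity L = {(s:t:0)}. -/
def Linf : Set P2 := {p | p.rep 2 = 0}

/-! ### Auxiliary lemmas -/

lemma lin_eval (f : (Fin 3 → ℂ) →ₗ[ℂ] ℂ) (v : Fin 3 → ℂ) :
    f v = v 0 * f (Pi.single 0 1) + v 1 * f (Pi.single 1 1) + v 2 * f (Pi.single 2 1) := by
  have h : v = v 0 • (Pi.single 0 1 : Fin 3 → ℂ) + v 1 • (Pi.single 1 1 : Fin 3 → ℂ)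
      + v 2 • (Pi.single 2 1 : Fin 3 → ℂ) := by
    funext i; fin_cases i <;> simp [Pi.single_apply]
  conv_lhs => rw [h]
  simp [smul_eq_mul]

lemma lin_ext {f : (Fin 3 → ℂ) →ₗ[ℂ] ℂ} (h0 : f (Pi.single 0 1) = 0)
    (h1 : f (Pi.single 1 1) = 0) (h2 : f (Pi.single 2 1) = 0) : f = 0 := by
  apply LinearMap.ext; intro v
  rw [lin_eval, h0, h1, h2]; ring_nf; rfl

lemma mem_line_iff (f : (Fin 3 → ℂ) →ₗ[ℂ] ℂ) {v : Fin 3 → ℂ} (hv : v ≠ 0) :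
    f ((Projectivization.mk ℂ v hv).rep) = 0 ↔ f v = 0 := by
  obtain ⟨c, hc⟩ := exists_smul_eq_mk_rep ℂ v hv
  rw [← hc, Units.smul_def, map_smul, smul_eq_mul, mul_eq_zero]
  simp [c.ne_zero]

lemma rep2_eq_zero_iff {v : Fin 3 → ℂ} (hv : v ≠ 0) :
    (Projectivization.mk ℂ v hv).rep 2 = 0 ↔ v 2 = 0 := by
  obtain ⟨c, hc⟩ := exists_smul_eq_mk_rep ℂ v hv
  rw [← hc]
  simp [Units.smul_def, c.ne_zero]

lemma vec_ne_zero {v : Fin 3 → ℂ} (h0 : v 0 = 0) (h1 : v 1 = 0) (h2 : v 2 = 0) : v = 0 := by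
  funext i; fin_cases i <;> assumption

def Vv : Fin 4 → (Fin 3 → ℂ) := ![![1, 0, 1], ![-1, 0, 1], ![0, 1, 1], ![0, -1, 1]]

lemma Vv_ne (i : Fin 4) : Vv i ≠ 0 := by
  fin_cases i <;>
    (intro h; have := congrFun h 2; simp [Vv, Matrix.vecHead, Matrix.vecTail] at this)

def Pp : Fin 4 → P2 := fun i => Projectivization.mk ℂ (Vv i) (Vv_ne i)

lemma pick (x y z : ℂ) (hxyz : ¬(x = 0 ∧ y = 0 ∧ z = 0)) :
    ∃ i j : Fin 4, i ≠ j ∧ (![x + z, -x + z, y + z, -y + z] : Fin 4 → ℂ) i ≠ 0 ∧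
      (![x + z, -x + z, y + z, -y + z] : Fin 4 → ℂ) j ≠ 0 := by
  set G : Fin 4 → ℂ := ![x + z, -x + z, y + z, -y + z] with hG
  have g0 : G 0 = x + z := rfl
  have g1 : G 1 = -x + z := rfl
  have g2 : G 2 = y + z := rfl
  have g3 : G 3 = -y + z := rfl
  by_cases h0 : x + z = 0 <;> by_cases h2 : y + z = 0
  · refine ⟨1, 3, by decide, ?_, ?_⟩
    · rw [g1]; intro h
      exact hxyz ⟨by linear_combination (h0 - h) / 2, by linear_combination h2 - (h0 + h) / 2,
        by linear_combination (h0 + h) / 2⟩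
    · rw [g3]; intro h
      exact hxyz ⟨by linear_combination h0 - (h2 + h) / 2, by linear_combination (h2 - h) / 2,
        by linear_combination (h2 + h) / 2⟩
  · by_cases h1 : -x + z = 0
    · refine ⟨2, 3, by decide, ?_, ?_⟩
      · rw [g2]; exact h2
      · rw [g3]; intro h
        exact hxyz ⟨by linear_combination (h0 - h1) / 2, by linear_combination (h0 + h1) / 2 - h,
          by linear_combination (h0 + h1) / 2⟩
    · refine ⟨1, 2, by decide, ?_, ?_⟩
      · rw [g1]; exact h1
      · rw [g2]; exact h2
  · by_cases h3 : -y + z = 0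
    · refine ⟨0, 1, by decide, ?_, ?_⟩
      · rw [g0]; exact h0
      · rw [g1]; intro h
        exact hxyz ⟨by linear_combination (h2 + h3) / 2 - h, by linear_combination (h2 - h3) / 2,
          by linear_combination (h2 + h3) / 2⟩
    · refine ⟨0, 3, by decide, ?_, ?_⟩
      · rw [g0]; exact h0
      · rw [g3]; exact h3
  · refine ⟨0, 2, by decide, ?_, ?_⟩
    · rw [g0]; exact h0
    · rw [g2]; exact h2

lemma two_nonzero (f : (Fin 3 → ℂ) →ₗ[ℂ] ℂ) (hf : f ≠ 0) :
    ∃ i j : Fin 4, i ≠ j ∧ f (Vv i) ≠ 0 ∧ f (Vv j) ≠ 0 := by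
  set x := f (Pi.single 0 1)
  set y := f (Pi.single 1 1)
  set z := f (Pi.single 2 1)
  have eAll : ∀ i, f (Vv i) = (![x + z, -x + z, y + z, -y + z] : Fin 4 → ℂ) i := by
    intro i
    fin_cases i <;> (rw [lin_eval]; simp [Vv, Matrix.vecHead, Matrix.vecTail]; rfl)
  obtain ⟨i, j, hij, hi, hj⟩ := pick x y z (fun ⟨h1, h2, h3⟩ => hf (lin_ext h1 h2 h3))
  exact ⟨i, j, hij, by rw [eAll]; exact hi, by rw [eAll]; exact hj⟩

lemma inter_subsingleton (f : (Fin 3 → ℂ) →ₗ[ℂ] ℂ) (hf : f ≠ 0)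
    (hne : {p : P2 | f p.rep = 0} ≠ Linf) :
    ({p : P2 | f p.rep = 0} ∩ Linf).Subsingleton := by
  set c0 := f (Pi.single 0 1) with hc0
  set c1 := f (Pi.single 1 1) with hc1
  set c2 := f (Pi.single 2 1) with hc2
  by_cases hc : c0 = 0 ∧ c1 = 0
  · exfalso
    apply hne
    have h2 : c2 ≠ 0 := fun h => hf (lin_ext hc.1 hc.2 h)
    ext p
    simp only [Set.mem_setOf_eq, Linf, lin_eval f p.rep, ← hc0, ← hc1, ← hc2, hc.1, hc.2]
    constructor
    · intro h
      have h' : c2 * p.rep 2 = 0 := by linear_combination h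
      exact (mul_eq_zero.1 h').resolve_left h2
    · intro h; rw [h]; ring
  · intro p hp q hq
    have hu2 : p.rep 2 = 0 := hp.2
    have hw2 : q.rep 2 = 0 := hq.2
    have equ : p.rep 0 * c0 + p.rep 1 * c1 = 0 := by
      have := hp.1
      rw [Set.mem_setOf_eq, lin_eval, ← hc0, ← hc1, ← hc2, hu2] at this
      linear_combination this
    have eqw : q.rep 0 * c0 + q.rep 1 * c1 = 0 := by
      have := hq.1
      rw [Set.mem_setOf_eq, lin_eval, ← hc0, ← hc1, ← hc2, hw2] at this
      linear_combination this
    have cross : p.rep 0 * q.rep 1 = p.rep 1 * q.rep 0 := by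
      by_cases h0 : c0 = 0
      · have h1 : c1 ≠ 0 := fun h => hc ⟨h0, h⟩
        rw [h0] at equ eqw
        rw [mul_zero, zero_add] at equ eqw
        have hu1 : p.rep 1 = 0 := (mul_eq_zero.1 equ).resolve_right h1
        have hw1 : q.rep 1 = 0 := (mul_eq_zero.1 eqw).resolve_right h1
        rw [hu1, hw1]; ring
      · have key : c0 * (p.rep 0 * q.rep 1 - p.rep 1 * q.rep 0) = 0 := by
          linear_combination q.rep 1 * equ - p.rep 1 * eqw
        have h := (mul_eq_zero.1 key).resolve_left h0
        linear_combination h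
    have hwne := q.rep_nonzero
    rw [← p.mk_rep, ← q.mk_rep, mk_eq_mk_iff']
    by_cases hw0 : q.rep 0 = 0
    · have hw1 : q.rep 1 ≠ 0 := by
        intro hw1
        exact hwne (vec_ne_zero hw0 hw1 hw2)
      refine ⟨p.rep 1 / q.rep 1, ?_⟩
      funext i
      fin_cases i
      · show p.rep 1 / q.rep 1 * q.rep 0 = p.rep 0
        have hu0 : p.rep 0 = 0 := by
          have : p.rep 0 * q.rep 1 = 0 := by rw [cross, hw0]; ring
          exact (mul_eq_zero.1 this).resolve_right hw1
        rw [hw0, hu0]; ring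
      · show p.rep 1 / q.rep 1 * q.rep 1 = p.rep 1
        field_simp
      · show p.rep 1 / q.rep 1 * q.rep 2 = p.rep 2
        rw [hw2, hu2]; ring
    · refine ⟨p.rep 0 / q.rep 0, ?_⟩
      funext i
      fin_cases i
      · show p.rep 0 / q.rep 0 * q.rep 0 = p.rep 0
        field_simp
      · show p.rep 0 / q.rep 0 * q.rep 1 = p.rep 1
        field_simp
        linear_combination cross
      · show p.rep 0 / q.rep 0 * q.rep 2 = p.rep 2
        rw [hw2, hu2]; ring

lemma F_inter_le (f : (Fin 3 → ℂ) →ₗ[ℂ] ℂ) (hf : f ≠ 0) :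
    (F ∩ {p : P2 | f p.rep = 0}).ncard ≤ 2 := by
  obtain ⟨i, j, hij, hi, hj⟩ := two_nonzero f hf
  have hsub : F ∩ {p : P2 | f p.rep = 0} ⊆ Pp '' ({i, j}ᶜ) := by
    rintro p ⟨hpF, hpL⟩
    have hex : ∃ k : Fin 4, p = Pp k := by
      simp only [F, Set.mem_insert_iff, Set.mem_singleton_iff] at hpF
      rcases hpF with h | h | h | h
      · exact ⟨0, h⟩
      · exact ⟨1, h⟩
      · exact ⟨2, h⟩
      · exact ⟨3, h⟩
    obtain ⟨k, rfl⟩ := hex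
    refine ⟨k, ?_, rfl⟩
    have hk : f (Vv k) = 0 := (mem_line_iff f (Vv_ne k)).1 hpL
    simp only [Set.mem_compl_iff, Set.mem_insert_iff, Set.mem_singleton_iff, not_or]
    exact ⟨fun h => hi (h ▸ hk), fun h => hj (h ▸ hk)⟩
  calc (F ∩ {p : P2 | f p.rep = 0}).ncard
      ≤ (Pp '' ({i, j}ᶜ)).ncard := Set.ncard_le_ncard hsub (Set.toFinite _)
    _ ≤ ({i, j}ᶜ : Set (Fin 4)).ncard := Set.ncard_image_le (Set.toFinite _)
    _ ≤ 2 := by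
        have h := Set.ncard_add_ncard_compl ({i, j} : Set (Fin 4)) (Set.toFinite _)
          (Set.toFinite _)
        rw [Set.ncard_pair hij] at h
        have h4 : Nat.card (Fin 4) = 4 := by simp
        omega

lemma image_line (g : (Fin 3 → ℂ) ≃ₗ[ℂ] (Fin 3 → ℂ)) (f : (Fin 3 → ℂ) →ₗ[ℂ] ℂ) :
    proj g '' {p : P2 | f p.rep = 0}
      = {p : P2 | (f.comp g.symm.toLinearMap) p.rep = 0} := by
  ext q
  simp only [Set.mem_image, Set.mem_setOf_eq]
  constructor
  · rintro ⟨p, hp, rfl⟩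
    have h1 : proj g p = Projectivization.mk ℂ (g p.rep)
        (fun h => p.rep_nonzero (g.map_eq_zero_iff.1 h)) := by
      conv_lhs => rw [← p.mk_rep]
      rfl
    rw [h1, mem_line_iff]
    show f (g.symm (g p.rep)) = 0
    rw [g.symm_apply_apply]
    exact hp
  · intro hq
    have hvne : g.symm q.rep ≠ 0 := fun h => q.rep_nonzero (by
      have := congrArg g h
      rwa [g.apply_symm_apply, map_zero] at this)
    refine ⟨Projectivization.mk ℂ (g.symm q.rep) hvne, ?_, ?_⟩
    · show f (Projectivization.mk ℂ (g.symm q.rep) hvne).rep = 0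
      rw [mem_line_iff]
      exact hq
    · show Projectivization.map g.toLinearMap g.injective _ = q
      rw [Projectivization.map_mk]
      conv_rhs => rw [← q.mk_rep]
      apply (Projectivization.mk_eq_mk_iff' ℂ _ _ _ _).2
      refine ⟨1, ?_⟩
      rw [one_smul]
      exact (g.apply_symm_apply _).symm

lemma proj_injective (g : (Fin 3 → ℂ) ≃ₗ[ℂ] (Fin 3 → ℂ)) : Function.Injective (proj g) :=
  Projectivization.map_injective g.toLinearMap g.injective

lemma F_finite : F.Finite := by
  unfold F
  exact (((Set.finite_singleton _).insert _).insert _).insert _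

lemma Spts_finite (m : ℕ) (a : Fin m → ℂ) : (Spts m a).Finite := by
  unfold Spts
  apply Set.Finite.union
  · apply Set.finite_iUnion
    intro i
    exact (Set.finite_singleton _).insert _
  · exact F_finite

/-- for m ≥ 2 and generic a₁,…,a_m ∈ ℂ* (concretely: all aᵢ nonzero and the
2m points (aᵢ:1:0), (1:-conj(aᵢ):0) pairwise distinct), the line L = {(s:t:0)} is the
unique line containing at least 4 points of S = {(aᵢ:1:0), (1:-conj(aᵢ):0)} ∪ F, and L is
stabilized by every element of Aut_ℂ(ℙ², S). -/
theorem line_at_infinity_unique_and_stabilized (m : ℕ) (hm : 2 ≤ m) (a : Fin m → ℂ)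
    (ha0 : ∀ i, a i ≠ 0)
    (hinj : Function.Injective (Sum.elim
      (fun i : Fin m => Projectivization.mk ℂ ![a i, 1, 0]
        (fun h => by have := congrFun h 1; simp at this))
      (fun i : Fin m => Projectivization.mk ℂ ![1, -(starRingEnd ℂ (a i)), 0]
        (fun h => by have := congrFun h 0; simp at this)) : Fin m ⊕ Fin m → P2)) :
    IsLine Linf ∧ 4 ≤ (Spts m a ∩ Linf).ncard ∧
    (∀ L' : Set P2, IsLine L' → 4 ≤ (Spts m a ∩ L').ncard → L' = Linf) ∧
    (∀ g : (Fin 3 → ℂ) ≃ₗ[ℂ] (Fin 3 → ℂ), proj g '' Spts m a = Spts m a →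
      proj g '' Linf = Linf) := by
  have hproj2 : (LinearMap.proj 2 : (Fin 3 → ℂ) →ₗ[ℂ] ℂ) ≠ 0 := by
    intro h
    have := LinearMap.congr_fun h (Pi.single 2 1)
    simp at this
  have hLinf : Linf = {p : P2 | (LinearMap.proj 2 : (Fin 3 → ℂ) →ₗ[ℂ] ℂ) p.rep = 0} := rfl
  have hline : IsLine Linf := ⟨LinearMap.proj 2, hproj2, hLinf⟩
  -- the four marked points at infinity
  set i0 : Fin m := ⟨0, by omega⟩ with hi0
  set i1 : Fin m := ⟨1, by omega⟩ with hi1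
  have hi01 : i0 ≠ i1 := by simp [hi0, hi1, Fin.ext_iff]
  set X : Fin m → P2 := fun i => Projectivization.mk ℂ ![a i, 1, 0]
    (fun h => by have := congrFun h 1; simp at this) with hX
  set Y : Fin m → P2 := fun i => Projectivization.mk ℂ ![1, -(starRingEnd ℂ (a i)), 0]
    (fun h => by have := congrFun h 0; simp at this) with hY
  have hXY : ∀ i j, X i ≠ Y j := fun i j h =>
    (by simp : (Sum.inl i : Fin m ⊕ Fin m) ≠ Sum.inr j) (hinj h)
  have hXX : ∀ i j, i ≠ j → X i ≠ X j := fun i j hij h =>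
    hij (Sum.inl.inj (hinj (h : Sum.elim X Y (Sum.inl i) = Sum.elim X Y (Sum.inl j))))
  have hYY : ∀ i j, i ≠ j → Y i ≠ Y j := fun i j hij h =>
    hij (Sum.inr.inj (hinj (h : Sum.elim X Y (Sum.inr i) = Sum.elim X Y (Sum.inr j))))
  have hXmem : ∀ i, X i ∈ Spts m a ∩ Linf := by
    intro i
    constructor
    · exact Set.mem_union_left _ (Set.mem_iUnion.2 ⟨i, Set.mem_insert _ _⟩)
    · show (X i).rep 2 = 0
      rw [hX]
      rw [rep2_eq_zero_iff]
      rfl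
  have hYmem : ∀ i, Y i ∈ Spts m a ∩ Linf := by
    intro i
    constructor
    · exact Set.mem_union_left _ (Set.mem_iUnion.2 ⟨i, Set.mem_insert_of_mem _ rfl⟩)
    · show (Y i).rep 2 = 0
      rw [hY]
      rw [rep2_eq_zero_iff]
      rfl
  have hSfin := Spts_finite m a
  have hcard4 : 4 ≤ (Spts m a ∩ Linf).ncard := by
    have hsub : ({X i0, X i1, Y i0, Y i1} : Set P2) ⊆ Spts m a ∩ Linf := by
      rintro p (rfl | rfl | rfl | rfl)
      · exact hXmem i0
      · exact hXmem i1
      · exact hYmem i0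
      · exact hYmem i1
    have hc : ({X i0, X i1, Y i0, Y i1} : Set P2).ncard = 4 := by
      rw [Set.ncard_insert_of_notMem (by
          simp only [Set.mem_insert_iff, Set.mem_singleton_iff, not_or]
          exact ⟨hXX i0 i1 hi01, hXY i0 i0, hXY i0 i1⟩) (Set.toFinite _),
        Set.ncard_insert_of_notMem (by
          simp only [Set.mem_insert_iff, Set.mem_singleton_iff, not_or]
          exact ⟨hXY i1 i0, hXY i1 i1⟩) (Set.toFinite _),
        Set.ncard_pair (hYY i0 i1 hi01)]
    calc 4 = ({X i0, X i1, Y i0, Y i1} : Set P2).ncard := hc.symm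
      _ ≤ (Spts m a ∩ Linf).ncard :=
          Set.ncard_le_ncard hsub (hSfin.inter_of_left _)
  have huniq : ∀ L' : Set P2, IsLine L' → 4 ≤ (Spts m a ∩ L').ncard → L' = Linf := by
    rintro L' ⟨f, hf, rfl⟩ h4
    by_contra hne
    have hsub : Spts m a ∩ {p : P2 | f p.rep = 0}
        ⊆ ({p : P2 | f p.rep = 0} ∩ Linf) ∪ (F ∩ {p : P2 | f p.rep = 0}) := by
      rintro p ⟨hpS, hpL⟩
      rcases hpS with hpA | hpF
      · left
        refine ⟨hpL, ?_⟩
        obtain ⟨i, hpi⟩ := Set.mem_iUnion.1 hpA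
        rcases hpi with h | h
        · rw [h]
          show (Projectivization.mk ℂ ![a i, 1, 0] _).rep 2 = 0
          rw [rep2_eq_zero_iff]; rfl
        · rw [h]
          show (Projectivization.mk ℂ ![1, -(starRingEnd ℂ (a i)), 0] _).rep 2 = 0
          rw [rep2_eq_zero_iff]; rfl
      · exact Or.inr ⟨hpF, hpL⟩
    have hss := inter_subsingleton f hf hne
    have h1 : ({p : P2 | f p.rep = 0} ∩ Linf).ncard ≤ 1 :=
      (Set.ncard_le_one hss.finite).2 fun x hx y hy => hss hx hy
    have h2 : (F ∩ {p : P2 | f p.rep = 0}).ncard ≤ 2 := F_inter_le f hf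
    have hfin : (({p : P2 | f p.rep = 0} ∩ Linf) ∪ (F ∩ {p : P2 | f p.rep = 0})).Finite :=
      hss.finite.union (F_finite.inter_of_left _)
    have := Set.ncard_le_ncard hsub hfin
    have hle := Set.ncard_union_le ({p : P2 | f p.rep = 0} ∩ Linf)
      (F ∩ {p : P2 | f p.rep = 0})
    omega
  refine ⟨hline, hcard4, huniq, ?_⟩
  intro g hg
  have hcomp : (LinearMap.proj 2 : (Fin 3 → ℂ) →ₗ[ℂ] ℂ).comp g.symm.toLinearMap ≠ 0 := by
    intro h
    apply hproj2
    apply LinearMap.ext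
    intro v
    have := LinearMap.congr_fun h (g v)
    simpa [g.symm_apply_apply] using this
  have himg : proj g '' Linf
      = {p : P2 | ((LinearMap.proj 2 : (Fin 3 → ℂ) →ₗ[ℂ] ℂ).comp g.symm.toLinearMap)
          p.rep = 0} := by
    rw [hLinf]
    exact image_line g _
  apply huniq
  · exact ⟨_, hcomp, himg⟩
  · have heq : Spts m a ∩ (proj g '' Linf) = proj g '' (Spts m a ∩ Linf) := by
      rw [Set.image_inter (proj_injective g), hg]
    rw [heq, Set.ncard_image_of_injective _ (proj_injective g)]
    exact hcard4

end
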